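/- Let 1 < p < 2, q = p/(p−1) > 2, c > 0, d ≥ c, and γ_p > c as defined below. Then there exists a unique ε_p > 0 such that φ_q(ε_p/γ_p) = ε_p²/(2c²); moreover φ_q(ε/γ_p) < ε²/(2c²) for 0 < ε < ε_p and φ_q(ε/γ_p) > ε²/(2c²) for ε > ε_p. -/

import Mathlib

open MeasureTheory Real Filter

noncomputable def phi (p x : ℝ) : ℝ :=
  if |x| ≤ 1 then x ^ 2 / 2 else |x| ^ p / p - 1 / p + 1 / 2

noncomputable def gam (r c d : ℝ) : ℝ :=
  c ^ 2 / (2 * d) * (r * (2 * (d / c) ^ 2 + 1 / r - 1 / 2)) ^ (1 / r)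

/-- the ratio function G(x) = φ_q(x)/x² for x ≥ 1 -/
noncomputable def Gfun (q x : ℝ) : ℝ := (x ^ q / q - 1 / q + 1 / 2) / x ^ 2

lemma gam_gt_c (p c d : ℝ) (hp1 : 1 < p) (hp2 : p < 2) (hc : 0 < c) (hd : c ≤ d) :
    c < gam p c d := by
  have hd0 : 0 < d := lt_of_lt_of_le hc hd
  set s : ℝ := d / c with hs_def
  have hs1 : 1 ≤ s := (one_le_div hc).2 hd
  set t : ℝ := 2 * s with ht_def
  have ht2 : 2 ≤ t := by simp [ht_def]; linarith
  have ht0 : 0 < t := by linarith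
  have hp0 : 0 < p := by linarith
  -- convexity of exp gives t^p ≤ (2-p) t + (p-1) t^2
  have hconv := convexOn_exp.2 (Set.mem_univ (Real.log t)) (Set.mem_univ (2 * Real.log t))
    (by linarith : (0:ℝ) ≤ 2 - p) (by linarith : (0:ℝ) ≤ p - 1) (by ring)
  have hexp1 : Real.exp (Real.log t) = t := Real.exp_log ht0
  have hexp2 : Real.exp (2 * Real.log t) = t ^ 2 := by
    rw [two_mul, Real.exp_add, hexp1]; ring
  have hkey : t ^ p ≤ (2 - p) * t + (p - 1) * t ^ 2 := by
    have h1 : (2 - p) • Real.log t + (p - 1) • (2 * Real.log t) = Real.log t * p := by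
      simp only [smul_eq_mul]; ring
    rw [Real.rpow_def_of_pos ht0, ← h1]
    simpa [smul_eq_mul, hexp1, hexp2] using hconv
  set A : ℝ := p * (2 * s ^ 2 + 1 / p - 1 / 2) with hA_def
  have hA : A = 2 * p * s ^ 2 + 1 - p / 2 := by
    rw [hA_def]; field_simp
  have hAt : t ^ p < A := by
    rw [hA]
    have h1 : 0 < (2 - p) * (2 * s - 1) ^ 2 :=
      mul_pos (by linarith) (pow_pos (by linarith) 2)
    calc t ^ p ≤ (2 - p) * t + (p - 1) * t ^ 2 := hkey
      _ < 2 * p * s ^ 2 + 1 - p / 2 := by rw [ht_def]; nlinarith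
  have htp0 : 0 < t ^ p := Real.rpow_pos_of_pos ht0 p
  have h2 : t < A ^ (1 / p) := by
    have := Real.rpow_lt_rpow htp0.le hAt (by positivity : (0:ℝ) < 1 / p)
    rwa [one_div, Real.rpow_rpow_inv ht0.le (ne_of_gt hp0), ← one_div] at this
  have hcoef : 0 < c ^ 2 / (2 * d) := by positivity
  have hfinal : c ^ 2 / (2 * d) * t = c := by
    rw [ht_def, hs_def]; field_simp
  calc c = c ^ 2 / (2 * d) * t := hfinal.symm
    _ < c ^ 2 / (2 * d) * A ^ (1 / p) := by
        exact (mul_lt_mul_iff_right₀ hcoef).2 h2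
    _ = gam p c d := rfl

lemma Gfun_hasDerivAt (q x : ℝ) (hq0 : q ≠ 0) (hx : 0 < x) :
    HasDerivAt (Gfun q)
      ((x ^ (q - 1) * x ^ 2 - (x ^ q / q - 1 / q + 1 / 2) * (2 * x)) / (x ^ 2) ^ 2) x := by
  have h : HasDerivAt (fun y : ℝ => y ^ q) (q * x ^ (q - 1)) x :=
    Real.hasDerivAt_rpow_const (Or.inl hx.ne')
  have h1 : HasDerivAt (fun y : ℝ => y ^ q / q - 1 / q + 1 / 2) (x ^ (q - 1)) x := by
    have heq : q * x ^ (q - 1) / q = x ^ (q - 1) := by field_simp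
    have := ((h.div_const q).sub_const (1 / q)).add_const (1 / 2)
    rwa [heq] at this
  have h2 : HasDerivAt (fun y : ℝ => y ^ 2) (2 * x) x := by
    simpa using hasDerivAt_pow 2 x
  exact h1.div h2 (by positivity)

lemma Gfun_deriv_pos {q x : ℝ} (hq2 : 2 < q) (hx : 1 < x) : 0 < deriv (Gfun q) x := by
  have hx0 : 0 < x := by linarith
  have hq0 : 0 < q := by linarith
  rw [(Gfun_hasDerivAt q x (by positivity) hx0).deriv]
  have hxq : 1 < x ^ q := by
    rw [show (1:ℝ) = 1 ^ q by simp]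
    exact Real.rpow_lt_rpow (by norm_num) hx hq0
  have hnum : x ^ (q - 1) * x ^ 2 - (x ^ q / q - 1 / q + 1 / 2) * (2 * x)
      = x * ((1 - 2 / q) * (x ^ q - 1)) := by
    have h1 : x ^ (q - 1) * x = x ^ q := by
      rw [← Real.rpow_add_one hx0.ne' (q - 1)]; ring_nf
    have h2 : x ^ (q - 1) * x ^ 2 = x ^ q * x := by
      rw [pow_two, ← mul_assoc, h1]
    rw [h2]; field_simp; ring
  rw [hnum]
  have h3 : 0 < 1 - 2 / q := by
    rw [sub_pos, div_lt_one hq0]; exact hq2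
  have h4 : 0 < x ^ q - 1 := by linarith
  exact div_pos (mul_pos hx0 (mul_pos h3 h4)) (by positivity)

lemma Gfun_strictMono {q : ℝ} (hq2 : 2 < q) : StrictMonoOn (Gfun q) (Set.Ici 1) := by
  apply strictMonoOn_of_deriv_pos (convex_Ici 1)
  · intro x hx
    exact (Gfun_hasDerivAt q x (by positivity) (by simp at hx; linarith)).continuousAt.continuousWithinAt
  · intro x hx
    rw [interior_Ici] at hx
    exact Gfun_deriv_pos hq2 hx

lemma Gfun_one {q : ℝ} : Gfun q 1 = 1 / 2 := by
  simp [Gfun]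

lemma Gfun_lower {q x : ℝ} (hq2 : 2 < q) (hx : 1 ≤ x) : x ^ (q - 2) / q ≤ Gfun q x := by
  have hx0 : 0 < x := by linarith
  have hq0 : 0 < q := by linarith
  have h1 : x ^ q = x ^ (q - 2) * x ^ 2 := by
    rw [← Real.rpow_natCast x 2, ← Real.rpow_add hx0]
    norm_num
  have h2 : Gfun q x = x ^ (q - 2) / q + (1 / 2 - 1 / q) / x ^ 2 := by
    rw [Gfun, h1]; field_simp; ring
  have h3 : (0:ℝ) ≤ (1 / 2 - 1 / q) / x ^ 2 := by
    apply div_nonneg _ (by positivity)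
    have : 1 / q ≤ 1 / 2 := by
      rw [div_le_div_iff₀ hq0 (by norm_num)]; linarith
    linarith
  linarith [h2, h3]

lemma phi_of_gt_one {q x : ℝ} (hx : 1 < x) : phi q x = Gfun q x * x ^ 2 := by
  rw [phi, if_neg (by rw [abs_of_pos (by linarith)]; linarith), abs_of_pos (by linarith : (0:ℝ) < x),
    Gfun, div_mul_cancel₀]
  positivity

theorem stmt_19 (p q c d : ℝ) (hp1 : 1 < p) (hp2 : p < 2) (hq : q = p / (p - 1))
    (hc : 0 < c) (hd : c ≤ d) :
    ∃ εp : ℝ, 0 < εp ∧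
      phi q (εp / gam p c d) = εp ^ 2 / (2 * c ^ 2) ∧
      (∀ ε : ℝ, 0 < ε → ε < εp → phi q (ε / gam p c d) < ε ^ 2 / (2 * c ^ 2)) ∧
      (∀ ε : ℝ, εp < ε → ε ^ 2 / (2 * c ^ 2) < phi q (ε / gam p c d)) ∧
      ∀ ε : ℝ, 0 < ε → phi q (ε / gam p c d) = ε ^ 2 / (2 * c ^ 2) → ε = εp := by
  have hp0 : (0:ℝ) < p - 1 := by linarith
  have hq2 : 2 < q := by
    rw [hq, lt_div_iff₀ hp0]; linarith
  have hq0 : (0:ℝ) < q := by linarith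
  have hγ : c < gam p c d := gam_gt_c p c d hp1 hp2 hc hd
  set γ := gam p c d with hγdef
  have hγ0 : 0 < γ := lt_trans hc hγ
  set K : ℝ := γ ^ 2 / (2 * c ^ 2) with hKdef
  have hKhalf : 1 / 2 < K := by
    rw [hKdef, lt_div_iff₀ (by positivity)]
    nlinarith [mul_self_lt_mul_self hc.le hγ]
  -- find x0 with Gfun q x0 > K
  have hten : Tendsto (fun x : ℝ => x ^ (q - 2) / q) atTop atTop :=
    (tendsto_rpow_atTop (by linarith)).atTop_div_const hq0
  obtain ⟨x0, hx0K, hx01⟩ := ((hten.eventually_gt_atTop K).and (eventually_ge_atTop 1)).exists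
  have hGx0 : K < Gfun q x0 := lt_of_lt_of_le hx0K (Gfun_lower hq2 hx01)
  have hcontOn : ContinuousOn (Gfun q) (Set.Icc 1 x0) := by
    intro x hx
    exact (Gfun_hasDerivAt q x (by positivity) (by linarith [hx.1])).continuousAt.continuousWithinAt
  obtain ⟨xs, hxsmem, hGxs⟩ := intermediate_value_Ioo hx01 hcontOn
    ⟨by rw [Gfun_one]; exact hKhalf, hGx0⟩
  obtain ⟨hxs1, hxsx0⟩ := hxsmem
  have hmono := Gfun_strictMono (q := q) hq2
  -- key claims
  have claimA : ∀ ε : ℝ, 0 < ε → ε < γ * xs → phi q (ε / γ) < ε ^ 2 / (2 * c ^ 2) := by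
    intro ε hε hεlt
    set x : ℝ := ε / γ with hx_def
    have hx0 : 0 < x := by positivity
    have hεx : ε = γ * x := by rw [hx_def]; field_simp
    have hxlt : x < xs := by
      rw [hx_def, div_lt_iff₀ hγ0]; linarith [hεlt]
    by_cases hx1 : x ≤ 1
    · rw [phi, if_pos (by rw [abs_of_pos hx0]; exact hx1), hεx, div_lt_div_iff₀ (by norm_num)
        (by positivity)]
      nlinarith [mul_pos hx0 hx0, mul_self_lt_mul_self hc.le hγ]
    · push_neg at hx1
      rw [phi_of_gt_one hx1, hεx]
      have hGlt : Gfun q x < Gfun q xs := hmono (Set.mem_Ici.2 hx1.le) (Set.mem_Ici.2 hxs1.le) hxlt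
      rw [hGxs] at hGlt
      have : (γ * x) ^ 2 / (2 * c ^ 2) = K * x ^ 2 := by rw [hKdef]; ring
      rw [this]
      exact mul_lt_mul_of_pos_right hGlt (by positivity)
  have claimB : ∀ ε : ℝ, γ * xs < ε → ε ^ 2 / (2 * c ^ 2) < phi q (ε / γ) := by
    intro ε hεgt
    have hε : 0 < ε := lt_trans (by positivity) hεgt
    set x : ℝ := ε / γ with hx_def
    have hεx : ε = γ * x := by rw [hx_def]; field_simp
    have hxgt : xs < x := by
      rw [hx_def, lt_div_iff₀ hγ0]; linarith [hεgt]
    have hx1 : 1 < x := lt_trans hxs1 hxgt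
    rw [phi_of_gt_one hx1, hεx]
    have hGgt : Gfun q xs < Gfun q x := hmono (Set.mem_Ici.2 hxs1.le) (Set.mem_Ici.2 hx1.le) hxgt
    rw [hGxs] at hGgt
    have : (γ * x) ^ 2 / (2 * c ^ 2) = K * x ^ 2 := by rw [hKdef]; ring
    rw [this]
    exact mul_lt_mul_of_pos_right hGgt (by positivity)
  refine ⟨γ * xs, by positivity, ?_, claimA, claimB, ?_⟩
  · have hdiv : γ * xs / γ = xs := by field_simp
    rw [hdiv, phi_of_gt_one hxs1, hGxs]
    rw [hKdef]; ring
  · intro ε hε heq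
    rcases lt_trichotomy ε (γ * xs) with h | h | h
    · exact absurd heq (ne_of_lt (claimA ε hε h))
    · exact h
    · exact absurd heq (ne_of_gt (claimB ε h))
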